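/- Let V be a nonzero finite-dimensional complex inner product space and let ρ : su(2) → End(V) be a homomorphism of real Lie algebras such that ρ(X) is skew-adjoint for every X ∈ su(2). Then the trace of exp(i·ρ(E)), where E = ĕ₁ + ĕ₂ + ĕ₃, is a real number and satisfies Tr exp(i·ρ(E)) ≥ 1. -/

import Mathlib

open Complex

lemma exp_apply_eigenvector {V : Type*} [NormedAddCommGroup V] [InnerProductSpace ℂ V]
    [FiniteDimensional ℂ V] (A : V →L[ℂ] V) (x : V) (μ : ℂ) (h : A x = μ • x) :
    NormedSpace.exp A x = Complex.exp μ • x := by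
  have hpow : ∀ n : ℕ, (A ^ n) x = μ ^ n • x := by
    intro n
    induction n with
    | zero => simp
    | succ n ih =>
      rw [pow_succ, ContinuousLinearMap.mul_apply, h, map_smul, ih, smul_smul, ← pow_succ']
  have hs : Summable fun n : ℕ => ((n.factorial : ℂ))⁻¹ • A ^ n := NormedSpace.expSeries_summable' A
  rw [NormedSpace.exp_eq_tsum (𝕂 := ℂ)]
  calc (∑' n : ℕ, ((n.factorial : ℂ))⁻¹ • A ^ n) x
      = ∑' n : ℕ, (((n.factorial : ℂ))⁻¹ • A ^ n) x := by
        exact ((ContinuousLinearMap.apply ℂ V x).map_tsum hs)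
    _ = ∑' n : ℕ, (((n.factorial : ℂ))⁻¹ * μ ^ n) • x := by
        refine tsum_congr fun n => ?_
        simp [hpow n, smul_smul]
    _ = (∑' n : ℕ, ((n.factorial : ℂ))⁻¹ * μ ^ n) • x := by
        refine Summable.tsum_smul_const ?_ x
        simpa [smul_eq_mul] using NormedSpace.expSeries_summable' (𝕂 := ℂ) μ
    _ = Complex.exp μ • x := by
        rw [Complex.exp_eq_exp_ℂ, NormedSpace.exp_eq_tsum (𝕂 := ℂ)]
        simp [smul_eq_mul]

lemma trace_eq_sum_of_diag_basis {V : Type*} [AddCommGroup V] [Module ℂ V]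
    [Module.Free ℂ V] [Module.Finite ℂ V] {n : ℕ}
    (b : Module.Basis (Fin n) ℂ V) (f : V →ₗ[ℂ] V) (d : Fin n → ℂ)
    (h : ∀ i, f (b i) = d i • b i) :
    LinearMap.trace ℂ V f = ∑ i, d i := by
  classical
  rw [LinearMap.trace_eq_matrix_trace ℂ b, Matrix.trace]
  simp [Matrix.diag, LinearMap.toMatrix_apply, h, Finsupp.single_apply]

/-- Let `V` be a nonzero finite-dimensional complex inner product space and let
`ρ : su(2) → End(V)` be a real Lie algebra homomorphism with skew-adjoint values;
`ρ` is recorded by the images `X 0, X 1, X 2` of the standard basis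
`ĕ₁, ĕ₂, ĕ₃` of `su(2)` (which satisfy `[ĕ₁,ĕ₂] = ĕ₃`, `[ĕ₂,ĕ₃] = ĕ₁`, `[ĕ₃,ĕ₁] = ĕ₂`).
Then the trace of `exp(i·ρ(E))`, with `E = ĕ₁ + ĕ₂ + ĕ₃`, is a real number `≥ 1`. -/
theorem trace_exp_su2_rep_ge_one
    (V : Type*) [NormedAddCommGroup V] [InnerProductSpace ℂ V]
    [FiniteDimensional ℂ V] [Nontrivial V]
    (X : Fin 3 → V →L[ℂ] V)
    (hbr₁ : X 0 * X 1 - X 1 * X 0 = X 2)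
    (hbr₂ : X 1 * X 2 - X 2 * X 1 = X 0)
    (hbr₃ : X 2 * X 0 - X 0 * X 2 = X 1)
    (hskew : ∀ i, ContinuousLinearMap.adjoint (X i) = -(X i)) :
    ∃ r : ℝ, 1 ≤ r ∧
      LinearMap.trace ℂ V
        (NormedSpace.exp (Complex.I • (X 0 + X 1 + X 2)) :
          V →L[ℂ] V).toLinearMap = (r : ℂ) := by
  classical
  set S : V →L[ℂ] V := X 0 + X 1 + X 2 with hSdef
  set H : V →L[ℂ] V := Complex.I • S with hHdef
  have hstar : ∀ i, star (X i) = -(X i) := fun i => by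
    rw [ContinuousLinearMap.star_eq_adjoint, hskew]
  -- H is self-adjoint
  have hH : IsSelfAdjoint H := by
    show star H = H
    rw [hHdef, star_smul, hSdef, star_add, star_add, hstar, hstar, hstar]
    simp [Complex.star_def, Complex.conj_I]
  have hsym : (H : V →ₗ[ℂ] V).IsSymmetric := hH.isSymmetric
  obtain ⟨n, hn⟩ : ∃ n, Module.finrank ℂ V = n := ⟨_, rfl⟩
  set b := hsym.eigenvectorBasis hn with hb
  set μ := hsym.eigenvalues hn with hμ
  have happly : ∀ i, H (b i) = (μ i : ℂ) • b i := fun i =>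
    hsym.apply_eigenvectorBasis hn i
  have hexp : ∀ i, NormedSpace.exp H (b i) = Complex.exp (μ i) • b i := fun i =>
    exp_apply_eigenvector H (b i) (μ i) (happly i)
  -- trace of H is zero since each X i is a commutator
  have htr0 : ∀ (A B C : V →L[ℂ] V), A * B - B * A = C →
      LinearMap.trace ℂ V C.toLinearMap = 0 := by
    intro A B C h
    rw [← h]
    have : ((A * B - B * A : V →L[ℂ] V) : V →ₗ[ℂ] V)
        = A.toLinearMap * B.toLinearMap - B.toLinearMap * A.toLinearMap := rfl
    rw [this, map_sub, LinearMap.trace_mul_comm, sub_self]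
  have htrH : LinearMap.trace ℂ V (H : V →ₗ[ℂ] V) = 0 := by
    have : (H : V →ₗ[ℂ] V) = Complex.I •
        ((X 0).toLinearMap + (X 1).toLinearMap + (X 2).toLinearMap) := rfl
    rw [this, map_smul, map_add, map_add,
      htr0 (X 0) (X 1) (X 2) hbr₁, htr0 (X 1) (X 2) (X 0) hbr₂,
      htr0 (X 2) (X 0) (X 1) hbr₃]
    simp
  -- trace of H via eigenvalues
  have htrH' : LinearMap.trace ℂ V (H : V →ₗ[ℂ] V) = ∑ i, (μ i : ℂ) :=
    trace_eq_sum_of_diag_basis b.toBasis _ _ (by simpa using happly)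
  have hsum0 : ∑ i, μ i = 0 := by
    have : ((∑ i, μ i : ℝ) : ℂ) = 0 := by
      push_cast
      rw [← htrH', htrH]
    exact_mod_cast this
  -- trace of exp H via eigenvalues
  have htrexp : LinearMap.trace ℂ V
      (NormedSpace.exp H : V →L[ℂ] V).toLinearMap = ∑ i, Complex.exp (μ i) :=
    trace_eq_sum_of_diag_basis b.toBasis _ _ (by simpa using hexp)
  refine ⟨∑ i, Real.exp (μ i), ?_, ?_⟩
  · have hpos : 0 < n := by
      rw [← hn]; exact Module.finrank_pos
    calc (1 : ℝ) ≤ n := by exact_mod_cast hpos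
      _ = ∑ i : Fin n, (1 + μ i) := by
          rw [Finset.sum_add_distrib, hsum0]; simp
      _ ≤ ∑ i, Real.exp (μ i) := by
          refine Finset.sum_le_sum fun i _ => ?_
          linarith [Real.add_one_le_exp (μ i)]
  · rw [htrexp]
    push_cast [← Complex.ofReal_exp]
    rfl
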